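/- Every Fuchsian pseudopolynomial factors off its Fuchsian part: if P(t,ξ) = Σ_{j≥0} t^j p_j(ξ) ∈ ℂ[[t]][ξ] has p_0 ≠ 0 with d = deg p_0, then there exist Q, R ∈ ℂ[[t]][ξ] with P = Q·R, where Q ≡ p_0 mod t, R ≡ 1 mod t, and every coefficient polynomial of Q in powers of t beyond the constant term has degree ≤ d − 1. -/

import Mathlib

open Polynomial PowerSeries

noncomputable def fuchsQR (P : PowerSeries (Polynomial ℂ)) : ℕ → Polynomial ℂ × Polynomial ℂ
  | 0 => (PowerSeries.constantCoeff P, 1)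
  | (j+1) =>
    let p₀ := PowerSeries.constantCoeff P
    let s := PowerSeries.coeff (j+1) P -
      ∑ i ∈ (Finset.Ioo 0 (j+1)).attach, (fuchsQR P i.1).1 * (fuchsQR P ((j+1)-i.1)).2
    (s % p₀, s / p₀)
  decreasing_by
  · exact (Finset.mem_Ioo.mp i.2).2
  · have h := Finset.mem_Ioo.mp i.2; omega

noncomputable def fuchsS (P : PowerSeries (Polynomial ℂ)) (j : ℕ) : Polynomial ℂ :=
  PowerSeries.coeff (j+1) P -
      ∑ i ∈ Finset.Ioo 0 (j+1), (fuchsQR P i).1 * (fuchsQR P ((j+1)-i)).2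

lemma fuchsQR_succ (P : PowerSeries (Polynomial ℂ)) (j : ℕ) :
    fuchsQR P (j+1) = (fuchsS P j % PowerSeries.constantCoeff P,
      fuchsS P j / PowerSeries.constantCoeff P) := by
  rw [fuchsQR]
  rw [Finset.sum_attach (Finset.Ioo 0 (j+1))
    (fun i => (fuchsQR P i).1 * (fuchsQR P ((j+1)-i)).2)]
  rfl

lemma fuchs_mul_deg_lt {q r : Polynomial ℂ} {d m : ℕ} (hq : q.degree < d) (hr : r.degree ≤ m) :
    (q * r).degree < ((d + m : ℕ) : WithBot ℕ) := by
  rcases eq_or_ne q 0 with hq0 | hq0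
  · rw [hq0, zero_mul, Polynomial.degree_zero]; exact WithBot.bot_lt_coe _
  rcases eq_or_ne r 0 with hr0 | hr0
  · rw [hr0, mul_zero, Polynomial.degree_zero]; exact WithBot.bot_lt_coe _
  rw [Polynomial.degree_mul, Polynomial.degree_eq_natDegree hq0,
    Polynomial.degree_eq_natDegree hr0] at *
  have h1 : q.natDegree < d := by exact_mod_cast hq
  have h2 : r.natDegree ≤ m := by exact_mod_cast hr
  exact_mod_cast by omega

/-- A pseudopolynomial `P = Σ_j t^j p_j(ξ) ∈ ℂ[[t]][ξ]` (an element of `(ℂ[ξ])[[t]]`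
with bounded `ξ`-degrees) with `p₀ ≠ 0`, `d = deg p₀`, factors as `P = Q·R` where
`Q ≡ p₀ mod t`, `R ≡ 1 mod t`, all higher `t`-coefficients of `Q` have `ξ`-degree
`≤ d - 1` (i.e. `< d`), and `Q, R` are again pseudopolynomials. -/
theorem fuchsian_part_factors_off
    (P : PowerSeries (Polynomial ℂ))
    (hbd : ∃ n : ℕ, ∀ j : ℕ, (PowerSeries.coeff j P).degree ≤ (n : ℕ))
    (hp₀ : PowerSeries.constantCoeff P ≠ 0)
    (d : ℕ) (hd : (PowerSeries.constantCoeff P).degree = d) :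
    ∃ Q R : PowerSeries (Polynomial ℂ),
      P = Q * R ∧
      PowerSeries.constantCoeff Q = PowerSeries.constantCoeff P ∧
      PowerSeries.constantCoeff R = 1 ∧
      (∀ j : ℕ, 1 ≤ j → (PowerSeries.coeff j Q).degree < (d : ℕ)) ∧
      (∃ m : ℕ, ∀ j : ℕ, (PowerSeries.coeff j R).degree ≤ (m : ℕ)) := by
  obtain ⟨n, hn⟩ := hbd
  set p₀ := PowerSeries.constantCoeff P with hp₀def
  have hdn : d ≤ n := by
    have := hn 0
    rw [PowerSeries.coeff_zero_eq_constantCoeff, ← hp₀def, hd] at this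
    exact_mod_cast this
  -- degree bound for the q's
  have hQdeg : ∀ j : ℕ, 1 ≤ j → ((fuchsQR P j).1).degree < (d : ℕ) := by
    intro j hj
    obtain ⟨k, rfl⟩ := Nat.exists_eq_add_of_le hj
    rw [add_comm, fuchsQR_succ]
    have h : (fuchsS P k % p₀).degree < p₀.degree := EuclideanDomain.mod_lt _ hp₀
    rw [hd] at h
    exact h
  -- degree bound for the r's
  have hRdeg : ∀ j : ℕ, ((fuchsQR P j).2).degree ≤ ((n - d : ℕ) : WithBot ℕ) := by
    intro j
    induction j using Nat.strong_induction_on with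
    | _ j ih =>
      match j with
      | 0 => simp [fuchsQR]
      | (k+1) =>
        rw [fuchsQR_succ]
        -- degree of fuchsS P k ≤ n
        have hs : (fuchsS P k).degree ≤ (n : WithBot ℕ) := by
          rw [fuchsS]
          refine le_trans (Polynomial.degree_sub_le _ _) (max_le (hn _) ?_)
          refine le_trans (Polynomial.degree_sum_le _ _) (Finset.sup_le ?_)
          intro i hi
          obtain ⟨hi0, hik⟩ := Finset.mem_Ioo.mp hi
          have h1 := hQdeg i hi0
          have h2 := ih (k+1-i) (by omega)
          have := fuchs_mul_deg_lt h1 h2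
          have hdd : d + (n - d) = n := by omega
          rw [hdd] at this
          exact this.le
        -- p₀ * (s / p₀) = s - s % p₀
        have hkey : p₀ * (fuchsS P k / p₀) = fuchsS P k - fuchsS P k % p₀ := by
          have := EuclideanDomain.div_add_mod (fuchsS P k) p₀
          linear_combination this
        rcases eq_or_ne (fuchsS P k / p₀) 0 with h0 | h0
        · simp [← hp₀def, h0]
        have hmod : (fuchsS P k % p₀).degree ≤ (n : WithBot ℕ) := by
          have h : (fuchsS P k % p₀).degree < p₀.degree := EuclideanDomain.mod_lt _ hp₀
          rw [hd] at h
          exact le_trans h.le (by exact_mod_cast hdn)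
        have hdeg : (p₀ * (fuchsS P k / p₀)).degree ≤ (n : WithBot ℕ) := by
          rw [hkey]
          exact le_trans (Polynomial.degree_sub_le _ _) (max_le hs hmod)
        rw [Polynomial.degree_mul, hd, Polynomial.degree_eq_natDegree h0] at hdeg
        have : d + (fuchsS P k / p₀).natDegree ≤ n := by exact_mod_cast hdeg
        rw [Polynomial.degree_eq_natDegree h0]
        exact_mod_cast by omega
  refine ⟨PowerSeries.mk (fun j => (fuchsQR P j).1),
    PowerSeries.mk (fun j => (fuchsQR P j).2), ?_, ?_, ?_, ?_, ⟨n - d, ?_⟩⟩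
  · -- P = Q * R
    refine PowerSeries.ext fun j => ?_
    rw [PowerSeries.coeff_mul]
    rw [Finset.Nat.sum_antidiagonal_eq_sum_range_succ_mk]
    simp only [PowerSeries.coeff_mk]
    match j with
    | 0 => simp [fuchsQR, hp₀def]
    | (k+1) =>
      rw [Finset.sum_range_succ]
      have hsplit : ∑ i ∈ Finset.range (k+1), (fuchsQR P i).1 * (fuchsQR P (k+1-i)).2
          = (fuchsQR P 0).1 * (fuchsQR P (k+1)).2
            + ∑ i ∈ Finset.Ioo 0 (k+1), (fuchsQR P i).1 * (fuchsQR P (k+1-i)).2 := by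
        rw [Finset.range_eq_Ico, Finset.sum_eq_sum_Ico_succ_bot (by omega)]
        congr 1
      rw [hsplit]
      have h0 : (fuchsQR P 0).1 = p₀ := by rw [hp₀def]; simp [fuchsQR]
      have h1 : (fuchsQR P (k+1)).2 = fuchsS P k / p₀ := by rw [fuchsQR_succ]
      have h2 : (fuchsQR P (k+1)).1 = fuchsS P k % p₀ := by rw [fuchsQR_succ]
      have h3 : (fuchsQR P (k+1-(k+1))).2 = 1 := by simp [fuchsQR]
      rw [h0, h1, h2, h3, mul_one]
      have hs := EuclideanDomain.div_add_mod (fuchsS P k) p₀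
      have hS : fuchsS P k = PowerSeries.coeff (k+1) P -
          ∑ i ∈ Finset.Ioo 0 (k+1), (fuchsQR P i).1 * (fuchsQR P ((k+1)-i)).2 := rfl
      linear_combination -hs - hS
  · simp [← PowerSeries.coeff_zero_eq_constantCoeff, fuchsQR, hp₀def]
  · simp [← PowerSeries.coeff_zero_eq_constantCoeff, fuchsQR, hp₀def]
  · intro j hj
    simpa using hQdeg j hj
  · intro j
    simpa using hRdeg j
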